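/- Let G be a finitely generated abelian group, H an abelian group, and A : G → H a group homomorphism such that for every k ≥ 1 the induced homomorphism G ⊗ ℤ/2^kℤ → H ⊗ ℤ/2^kℤ is injective. Then the kernel of A is contained in the torsion subgroup of G; equivalently, the induced map A ⊗ ℚ : G ⊗ ℚ → H ⊗ ℚ is injective. -/

import Mathlib

open TensorProduct Pointwise

-- divisibility from vanishing in G ⊗ ZMod n
lemma aux_div' {G : Type*} [AddCommGroup G] (n : ℕ) (g : G)
    (h : g ⊗ₜ (1 : ZMod n) = (0 : G ⊗[ℤ] ZMod n)) :
    ∃ y : G, (n : ℤ) • y = g := by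
  set I : Ideal ℤ := Ideal.span {(n : ℤ)} with hI
  let e : (ℤ ⧸ I) ≃ₗ[ℤ] ZMod n :=
    (Int.quotientSpanNatEquivZMod n).toAddEquiv.toIntLinearEquiv
  let f : (G ⊗[ℤ] ZMod n) ≃ₗ[ℤ] (G ⧸ (I • (⊤ : Submodule ℤ G))) :=
    (TensorProduct.congr (LinearEquiv.refl ℤ G) e.symm) ≪≫ₗ tensorQuotEquivQuotSMul G I
  have h1 : e.symm (1 : ZMod n) = Ideal.Quotient.mk I 1 := by
    rw [LinearEquiv.symm_apply_eq]
    exact (by simp : (Int.quotientSpanNatEquivZMod n) (Ideal.Quotient.mk I 1) = 1).symm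
  have h2 : f (g ⊗ₜ (1 : ZMod n)) = Submodule.Quotient.mk g := by
    show (tensorQuotEquivQuotSMul G I)
      ((TensorProduct.congr (LinearEquiv.refl ℤ G) e.symm) (g ⊗ₜ 1)) = _
    rw [TensorProduct.congr_tmul, h1]
    rw [tensorQuotEquivQuotSMul_tmul_mk, one_smul]
    rfl
  have h3 : Submodule.Quotient.mk g = (0 : G ⧸ (I • (⊤ : Submodule ℤ G))) := by
    rw [← h2, h, map_zero]
  have h4 : g ∈ I • (⊤ : Submodule ℤ G) := (Submodule.Quotient.mk_eq_zero _).mp h3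
  refine Submodule.smul_induction_on h4 ?_ ?_
  · intro r hr m _
    obtain ⟨c, rfl⟩ := Ideal.mem_span_singleton'.mp hr
    exact ⟨c • m, by rw [← mul_smul, mul_comm]⟩
  · rintro x y ⟨a, rfl⟩ ⟨b, rfl⟩
    exact ⟨a + b, smul_add _ _ _⟩

-- torsion from 2-power divisibility in a f.g. group
lemma aux_tors' {G : Type*} [AddCommGroup G] [AddGroup.FG G] (g : G)
    (h : ∀ k : ℕ, ∃ y : G, (2 ^ k : ℤ) • y = g) :
    ∃ m : ℕ, m ≠ 0 ∧ m • g = 0 := by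
  haveI : Module.Finite ℤ G := Module.Finite.iff_addGroup_fg.mpr ‹_›
  set T := Submodule.torsion ℤ G
  have hg : Submodule.Quotient.mk g = (0 : G ⧸ T) := by
    set x : G ⧸ T := Submodule.Quotient.mk g with hx
    have hdvd : ∀ k : ℕ, ∃ y : G ⧸ T, (2 ^ k : ℤ) • y = x := fun k => by
      obtain ⟨y, hy⟩ := h k
      exact ⟨Submodule.Quotient.mk y, by rw [← Submodule.Quotient.mk_smul, hy]⟩
    let b := Module.Free.chooseBasis ℤ (G ⧸ T)
    have hcoord : ∀ i, b.repr x i = 0 := by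
      intro i
      by_contra hc
      set c : ℤ := b.repr x i with hcdef
      obtain ⟨y, hy⟩ := hdvd c.natAbs
      have heq : (2 : ℤ) ^ c.natAbs * b.repr y i = c := by
        rw [← smul_eq_mul, ← Finsupp.smul_apply, ← map_smul, hy, ← hcdef]
      have hdv : (2 ^ c.natAbs : ℤ) ∣ c := ⟨b.repr y i, heq.symm⟩
      have h1 : (2 ^ c.natAbs : ℤ) ≤ |c| :=
        Int.le_of_dvd (abs_pos.mpr hc) ((dvd_abs _ _).mpr hdv)
      have h2 : |c| < (2 ^ c.natAbs : ℤ) := by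
        rw [Int.abs_eq_natAbs]
        exact_mod_cast Nat.lt_two_pow_self
      omega
    have : b.repr x = 0 := Finsupp.ext hcoord
    exact b.repr.map_eq_zero_iff.mp this
  have hgT : g ∈ T := (Submodule.Quotient.mk_eq_zero _).mp hg
  obtain ⟨a, ha⟩ := hgT
  have ha' : (a : ℤ) • g = 0 := ha
  refine ⟨(a : ℤ).natAbs, ?_, ?_⟩
  · have : (a : ℤ) ≠ 0 := nonZeroDivisors.coe_ne_zero a
    exact Int.natAbs_ne_zero.mpr this
  · have hz : ((a : ℤ).natAbs : ℤ) • g = 0 := by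
      rcases Int.natAbs_eq (a : ℤ) with h' | h'
      · rw [← h']; exact ha'
      · rw [show ((a:ℤ).natAbs : ℤ) = -(a:ℤ) by omega, neg_smul, ha', neg_zero]
    rw [natCast_zsmul] at hz
    exact hz

theorem stmt8 (G H : Type*) [AddCommGroup G] [AddCommGroup H] [AddGroup.FG G]
    (A : G →+ H)
    (hinj : ∀ k : ℕ, 1 ≤ k →
      Function.Injective
        (TensorProduct.map A.toIntLinearMap
          (LinearMap.id : ZMod (2 ^ k) →ₗ[ℤ] ZMod (2 ^ k)))) :
    (∀ g : G, A g = 0 → ∃ m : ℕ, m ≠ 0 ∧ m • g = 0) ∧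
    Function.Injective
      (TensorProduct.map A.toIntLinearMap (LinearMap.id : ℚ →ₗ[ℤ] ℚ)) := by
  have part1 : ∀ g : G, A g = 0 → ∃ m : ℕ, m ≠ 0 ∧ m • g = 0 := by
    intro g hg
    apply aux_tors'
    intro k
    rcases Nat.eq_zero_or_pos k with hk | hk
    · exact ⟨g, by simp [hk]⟩
    · have h0 : (TensorProduct.map A.toIntLinearMap
          (LinearMap.id : ZMod (2 ^ k) →ₗ[ℤ] ZMod (2 ^ k)))
          (g ⊗ₜ (1 : ZMod (2 ^ k))) = 0 := by
        rw [TensorProduct.map_tmul]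
        show (A g) ⊗ₜ _ = 0
        rw [hg, TensorProduct.zero_tmul]
      have h1 : g ⊗ₜ (1 : ZMod (2 ^ k)) = (0 : G ⊗[ℤ] ZMod (2 ^ k)) :=
        hinj k hk (by rw [h0, map_zero])
      obtain ⟨y, hy⟩ := aux_div' (2 ^ k) g h1
      exact ⟨y, by push_cast at hy ⊢; exact hy⟩
  refine ⟨part1, ?_⟩
  haveI : Module.Flat ℤ ℚ := IsLocalization.flat ℚ (nonZeroDivisors ℤ)
  set Aₗ := A.toIntLinearMap
  set K := LinearMap.ker Aₗ with hK
  have hzero : LinearMap.rTensor ℚ K.subtype = 0 := by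
    apply TensorProduct.ext'
    intro k q
    obtain ⟨m, hm, hmk⟩ := part1 (k : G) k.2
    have hmk' : (m : ℤ) • (k : G) = 0 := by rw [natCast_zsmul]; exact hmk
    have : (k : G) ⊗ₜ[ℤ] q = ((m : ℤ) • (k : G)) ⊗ₜ[ℤ] (q / (m : ℚ)) := by
      rw [TensorProduct.smul_tmul, zsmul_eq_mul]
      congr 1
      push_cast
      rw [mul_div_cancel₀]
      exact_mod_cast hm
    show (k : G) ⊗ₜ[ℤ] q = 0
    rw [this, hmk', TensorProduct.zero_tmul]
  have hπ : Function.Injective (LinearMap.rTensor ℚ K.mkQ) := by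
    rw [← LinearMap.ker_eq_bot, rTensor_mkQ, hzero, LinearMap.range_zero]
  have he : Function.Injective (LinearMap.rTensor ℚ (K.liftQ Aₗ le_rfl)) := by
    apply Module.Flat.rTensor_preserves_injective_linearMap
    rw [← LinearMap.ker_eq_bot]
    exact Submodule.ker_liftQ_eq_bot K Aₗ le_rfl le_rfl
  have hfact : TensorProduct.map Aₗ (LinearMap.id : ℚ →ₗ[ℤ] ℚ) =
      (LinearMap.rTensor ℚ (K.liftQ Aₗ le_rfl)).comp (LinearMap.rTensor ℚ K.mkQ) := by
    rw [← LinearMap.rTensor_comp, Submodule.liftQ_mkQ]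
    rfl
  rw [hfact]
  exact he.comp hπ
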